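/- For every integer n ≥ 1, the number of Catalan words of length n avoiding the vincular pattern 1-11 equals Σ_{i=1}^{n} Σ_{j=1}^{i} binom(j, n−i) · q_i(j), where binom(j, n−i) is the binomial coefficient (equal to 0 when n−i > j) and q_i(j) is the number of Catalan words of length i with no two equal adjacent letters whose largest letter is j. -/

import Mathlib

/-- A Catalan word: a word of positive integers starting with 1 in which each
letter exceeds its predecessor by at most 1. -/
def IsCatalanWord {n : ℕ} (w : Fin n → ℕ) : Prop :=
  (∀ i, 1 ≤ w i) ∧ (∀ h : 0 < n, w ⟨0, h⟩ = 1) ∧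
  ∀ i : ℕ, ∀ h : i + 1 < n, w ⟨i + 1, h⟩ ≤ w ⟨i, by omega⟩ + 1

/-- `w` contains the vincular pattern 1-11: there are indices `i < j` with
`w i = w j = w (j+1)`. -/
def Contains1_11 {n : ℕ} (w : Fin n → ℕ) : Prop :=
  ∃ i j : ℕ, ∃ hj : j + 1 < n, ∃ hij : i < j,
    w ⟨i, by omega⟩ = w ⟨j, by omega⟩ ∧ w ⟨j, by omega⟩ = w ⟨j + 1, hj⟩

/-- `q i j`: the number of Catalan words of length `i` with no two equal
adjacent letters whose largest letter is `j`. -/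
noncomputable def q (i j : ℕ) : ℕ :=
  Set.ncard {w : Fin i → ℕ | IsCatalanWord w ∧
    (∀ k : ℕ, ∀ h : k + 1 < i, w ⟨k + 1, h⟩ ≠ w ⟨k, by omega⟩) ∧
    (∀ k, w k ≤ j) ∧ (∃ k, w k = j)}


namespace CatAux

/-- expand: double the first occurrence of each value in `T`. -/
def expand : List ℕ → Finset ℕ → List ℕ
  | [], _ => []
  | a :: t, T => if a ∈ T then a :: a :: expand t (T.erase a) else a :: expand t (T.erase a)

/-- contract adjacent equal letters -/
def contr : List ℕ → List ℕ
  | [] => []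
  | [a] => [a]
  | a :: b :: t => if a = b then contr (b :: t) else a :: contr (b :: t)

/-- the set of values occurring as adjacent equal pairs -/
def doubles : List ℕ → Finset ℕ
  | a :: b :: t => if a = b then insert a (doubles (b :: t)) else doubles (b :: t)
  | _ => ∅

def CatL (l : List ℕ) : Prop :=
  (∀ x ∈ l, 1 ≤ x) ∧ (∀ a t, l = a :: t → a = 1) ∧ l.Chain' (fun a b => b ≤ a + 1)

def AvoidP (l : List ℕ) : Prop := ∀ p v r, l = p ++ v :: v :: r → v ∉ p

set_option linter.deprecated false in
@[simp] lemma chain'_nil {R : ℕ → ℕ → Prop} : List.Chain' R [] := List.IsChain.nil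

set_option linter.deprecated false in
@[simp] lemma chain'_singleton {R : ℕ → ℕ → Prop} (a : ℕ) : List.Chain' R [a] :=
  List.IsChain.singleton a

set_option linter.deprecated false in
lemma chain'_cons' {R : ℕ → ℕ → Prop} {x : ℕ} {l : List ℕ} :
    List.Chain' R (x :: l) ↔ (∀ y ∈ l.head?, R x y) ∧ List.Chain' R l := List.isChain_cons

set_option linter.deprecated false in
lemma chain'_cons {R : ℕ → ℕ → Prop} {a b : ℕ} {l : List ℕ} :
    List.Chain' R (a :: b :: l) ↔ R a b ∧ List.Chain' R (b :: l) := List.isChain_cons_cons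

set_option linter.deprecated false in
lemma chain'_iff_getElem {R : ℕ → ℕ → Prop} {l : List ℕ} :
    List.Chain' R l ↔ ∀ (i : ℕ) (_hi : i + 1 < l.length), R l[i] l[i + 1] :=
  List.isChain_iff_getElem

lemma expand_nil (T : Finset ℕ) : expand [] T = [] := rfl

lemma head?_expand (a : ℕ) (t : List ℕ) (T : Finset ℕ) :
    (expand (a :: t) T).head? = some a := by
  unfold expand; split <;> rfl

lemma mem_expand {x : ℕ} : ∀ (l : List ℕ) (T : Finset ℕ), x ∈ expand l T ↔ x ∈ l
  | [], T => by simp [expand]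
  | a :: t, T => by
    unfold expand
    split <;> simp [mem_expand t (T.erase a)]

lemma length_expand : ∀ (l : List ℕ) (T : Finset ℕ), T ⊆ l.toFinset →
    (expand l T).length = l.length + T.card
  | [], T, h => by
    simp at h; simp [expand, h]
  | a :: t, T, h => by
    have hsub : T.erase a ⊆ t.toFinset := by
      intro x hx
      have hxa := Finset.ne_of_mem_erase hx
      have := h (Finset.mem_of_mem_erase hx)
      simp at this
      rcases this with h1 | h1
      · exact absurd h1 hxa
      · simpa using h1
    have IH := length_expand t (T.erase a) hsub
    unfold expand
    split
    · rename_i ha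
      have : (T.erase a).card = T.card - 1 := Finset.card_erase_of_mem ha
      have hpos : 1 ≤ T.card := Finset.card_pos.2 ⟨a, ha⟩
      simp only [expand, List.length_cons, IH]; omega
    · rename_i ha
      have : T.erase a = T := Finset.erase_eq_of_notMem ha
      rw [this] at IH ⊢
      simp only [List.length_cons, IH]; omega

lemma chain'_expand : ∀ (l : List ℕ) (T : Finset ℕ),
    l.Chain' (fun a b => b ≤ a + 1) → (expand l T).Chain' (fun a b => b ≤ a + 1)
  | [], _, _ => by simp [expand]
  | a :: t, T, h => by
    rw [chain'_cons'] at h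
    have IH := chain'_expand t (T.erase a) h.2
    have hhead : ∀ y ∈ (expand t (T.erase a)).head?, y ≤ a + 1 := by
      intro y hy
      cases t with
      | nil => simp [expand] at hy
      | cons b t' =>
        rw [head?_expand] at hy
        simp at hy
        subst hy
        exact h.1 b (by simp)
    unfold expand
    split
    · rw [chain'_cons', chain'_cons']
      exact ⟨by simp, hhead, IH⟩
    · rw [chain'_cons']
      exact ⟨hhead, IH⟩


/-- key avoidance property of expand -/
lemma expand_avoid : ∀ (l : List ℕ) (T : Finset ℕ), l.Chain' (· ≠ ·) →
    ∀ p v r, expand l T = p ++ v :: v :: r → v ∉ p ∧ v ∈ T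
  | [], T, _, p, v, r, he => by simp [expand] at he
  | a :: t, T, hc, p, v, r, he => by
    rw [chain'_cons'] at hc
    have hhead : ∀ y : ℕ, (expand t (T.erase a)).head? = some y → a ≠ y := by
      intro y hy
      cases t with
      | nil => simp [expand] at hy
      | cons b t' =>
        rw [head?_expand] at hy
        injection hy with hy
        have hab : a ≠ b := hc.1 b (by simp)
        omega
    unfold expand at he
    split at he
    · rename_i haT
      match p, he with
      | [], he =>
        refine ⟨by simp, ?_⟩
        injection he with h1 he; subst h1; exact haT
      | [x], he =>
        exfalso
        injection he with h1 he; subst h1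
        injection he with h1 he; subst h1
        exact hhead a (by rw [he]; rfl) rfl
      | x :: y :: p'', he =>
        injection he with h1 he; subst h1
        injection he with h1 he; subst h1
        have IH := expand_avoid t (T.erase a) hc.2 p'' v r he
        have hva : v ≠ a := Finset.ne_of_mem_erase IH.2
        refine ⟨?_, Finset.mem_of_mem_erase IH.2⟩
        simp [IH.1, hva]
    · rename_i haT
      match p, he with
      | [], he =>
        exfalso
        injection he with h1 he; subst h1
        exact hhead a (by rw [he]; rfl) rfl
      | x :: p', he =>
        injection he with h1 he; subst h1
        have IH := expand_avoid t (T.erase a) hc.2 p' v r he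
        have hva : v ≠ a := Finset.ne_of_mem_erase IH.2
        refine ⟨?_, Finset.mem_of_mem_erase IH.2⟩
        simp [IH.1, hva]

lemma contr_expand : ∀ (l : List ℕ) (T : Finset ℕ), l.Chain' (· ≠ ·) →
    contr (expand l T) = l
  | [], T, _ => by simp [expand, contr]
  | [a], T, _ => by
    unfold expand
    split <;> simp [expand, contr]
  | a :: b :: t, T, hc => by
    rw [chain'_cons] at hc
    have IH := contr_expand (b :: t) (T.erase a) hc.2
    have hne : a ≠ b := hc.1
    obtain ⟨e', he'⟩ : ∃ e', expand (b :: t) (T.erase a) = b :: e' := by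
      unfold expand; split <;> exact ⟨_, rfl⟩
    unfold expand
    split
    · show contr (a :: a :: expand (b :: t) (T.erase a)) = _
      rw [he']
      show (if a = a then contr (a :: b :: e') else _) = _
      rw [if_pos rfl]
      show (if a = b then contr (b :: e') else a :: contr (b :: e')) = _
      rw [if_neg hne, ← he', IH]
    · show contr (a :: expand (b :: t) (T.erase a)) = _
      rw [he']
      show (if a = b then contr (b :: e') else a :: contr (b :: e')) = _
      rw [if_neg hne, ← he', IH]

lemma doubles_expand : ∀ (l : List ℕ) (T : Finset ℕ), l.Chain' (· ≠ ·) →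
    T ⊆ l.toFinset → doubles (expand l T) = T
  | [], T, _, hT => by simp at hT; simp [expand, doubles, hT]
  | [a], T, _, hT => by
    simp at hT
    unfold expand
    rcases hT with rfl | rfl
    · simp [expand, doubles]
    · simp [expand, doubles]
  | a :: b :: t, T, hc, hT => by
    rw [chain'_cons] at hc
    have hne : a ≠ b := hc.1
    have hsub : T.erase a ⊆ (b :: t).toFinset := by
      intro x hx
      have hxa := Finset.ne_of_mem_erase hx
      have := hT (Finset.mem_of_mem_erase hx)
      simp at this ⊢; tauto
    have IH := doubles_expand (b :: t) (T.erase a) hc.2 hsub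
    obtain ⟨e', he'⟩ : ∃ e', expand (b :: t) (T.erase a) = b :: e' := by
      unfold expand; split <;> exact ⟨_, rfl⟩
    unfold expand
    split
    · rename_i haT
      show doubles (a :: a :: expand (b :: t) (T.erase a)) = _
      rw [he']
      show (if a = a then insert a (doubles (a :: b :: e')) else _) = _
      rw [if_pos rfl]
      show insert a (if a = b then insert a (doubles (b :: e')) else doubles (b :: e')) = _
      rw [if_neg hne, ← he', IH, Finset.insert_erase haT]
    · rename_i haT
      show doubles (a :: expand (b :: t) (T.erase a)) = _
      rw [he']
      show (if a = b then insert a (doubles (b :: e')) else doubles (b :: e')) = _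
      rw [if_neg hne, ← he', IH, Finset.erase_eq_of_notMem haT]

lemma head?_contr : ∀ l : List ℕ, (contr l).head? = l.head? := by
  intro l
  induction l using contr.induct with
  | case1 => rfl
  | case2 a => rfl
  | case3 a t ih =>
    show (if a = a then contr (a :: t) else _).head? = _
    rw [if_pos rfl, ih]; rfl
  | case4 a b t h ih =>
    show (if a = b then _ else a :: contr (b :: t)).head? = _
    rw [if_neg h]; rfl

lemma contr_cons (a : ℕ) (t : List ℕ) : ∃ s, contr (a :: t) = a :: s := by
  have h := head?_contr (a :: t)
  cases hc : contr (a :: t) with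
  | nil => rw [hc] at h; simp at h
  | cons x s =>
    rw [hc] at h
    simp at h
    exact ⟨s, by rw [h]⟩

lemma mem_contr {x : ℕ} : ∀ l : List ℕ, x ∈ contr l ↔ x ∈ l := by
  intro l
  induction l using contr.induct with
  | case1 => simp [contr]
  | case2 a => simp [contr]
  | case3 a t ih =>
    show x ∈ (if a = a then contr (a :: t) else _) ↔ _
    rw [if_pos rfl, ih]
    simp only [List.mem_cons]; tauto
  | case4 a b t h ih =>
    show x ∈ (if a = b then _ else a :: contr (b :: t)) ↔ _
    rw [if_neg h]
    simp [ih]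
lemma chain'_ne_contr : ∀ l : List ℕ, (contr l).Chain' (· ≠ ·) := by
  intro l
  induction l using contr.induct with
  | case1 => simp [contr]
  | case2 a => simp [contr]
  | case3 a t ih =>
    show List.Chain' _ (if a = a then contr (a :: t) else _)
    rw [if_pos rfl]; exact ih
  | case4 a b t h ih =>
    show List.Chain' _ (if a = b then _ else a :: contr (b :: t))
    rw [if_neg h]
    obtain ⟨s, hs⟩ := contr_cons b t
    rw [hs]
    rw [hs] at ih
    exact chain'_cons.2 ⟨h, ih⟩

lemma chain'_step_contr : ∀ l : List ℕ, l.Chain' (fun a b => b ≤ a + 1) →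
    (contr l).Chain' (fun a b => b ≤ a + 1) := by
  intro l hl
  induction l using contr.induct with
  | case1 => simp [contr]
  | case2 a => simp [contr]
  | case3 a t ih =>
    show List.Chain' _ (if a = a then contr (a :: t) else _)
    rw [if_pos rfl]
    exact ih (chain'_cons.1 hl).2
  | case4 a b t h ih =>
    rw [chain'_cons] at hl
    show List.Chain' _ (if a = b then _ else a :: contr (b :: t))
    rw [if_neg h]
    obtain ⟨s, hs⟩ := contr_cons b t
    rw [hs]
    have := ih hl.2
    rw [hs] at this
    exact chain'_cons.2 ⟨hl.1, this⟩

lemma mem_doubles : ∀ (l : List ℕ) (x : ℕ), x ∈ doubles l → ∃ p r, l = p ++ x :: x :: r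
  | [], x, hx => by simp [doubles] at hx
  | [_], x, hx => by simp [doubles] at hx
  | a :: b :: t, x, hx => by
    by_cases hab : a = b
    · subst hab
      unfold doubles at hx
      rw [if_pos rfl] at hx
      rcases Finset.mem_insert.1 hx with rfl | hx
      · exact ⟨[], t, rfl⟩
      · obtain ⟨p, r, hpr⟩ := mem_doubles (a :: t) x hx
        exact ⟨a :: p, r, by rw [List.cons_append, ← hpr]⟩
    · unfold doubles at hx
      rw [if_neg hab] at hx
      obtain ⟨p, r, hpr⟩ := mem_doubles (b :: t) x hx
      exact ⟨a :: p, r, by rw [List.cons_append, ← hpr]⟩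

lemma avoidP_tail {x : ℕ} {l : List ℕ} (h : AvoidP (x :: l)) : AvoidP l := by
  intro p v r hl
  have := h (x :: p) v r (by rw [hl, List.cons_append])
  simp at this
  exact this.2

lemma avoidP_dedup {a : ℕ} {l : List ℕ} (h : AvoidP (a :: a :: l)) : AvoidP (a :: l) := by
  intro p v r hl
  match p, hl with
  | [], _ => simp
  | x :: p', hl =>
    injection hl with h1 h2; subst h1
    have h3 := h (a :: a :: p') v r (by rw [h2]; rfl)
    simp at h3 ⊢
    exact h3

lemma not_mem_doubles_tail {a : ℕ} {l : List ℕ} (h : AvoidP (a :: l)) : a ∉ doubles l := by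
  intro hm
  obtain ⟨p, r, hpr⟩ := mem_doubles l a hm
  exact h (a :: p) a r (by rw [hpr, List.cons_append]) (by simp)

lemma expand_contr_doubles : ∀ l : List ℕ, AvoidP l → expand (contr l) (doubles l) = l := by
  intro l
  induction l using contr.induct with
  | case1 => intro _; rfl
  | case2 a => intro _; simp [contr, doubles, expand]
  | case3 a t ih =>
    intro hav
    have hav1 : AvoidP (a :: t) := avoidP_dedup hav
    have hnd : a ∉ doubles (a :: t) := not_mem_doubles_tail hav
    obtain ⟨s, hs⟩ := contr_cons a t
    have hc3 : contr (a :: a :: t) = contr (a :: t) := by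
      show (if a = a then _ else _) = _; rw [if_pos rfl]
    have hd3 : doubles (a :: a :: t) = insert a (doubles (a :: t)) := by
      show (if a = a then _ else _) = _; rw [if_pos rfl]
    have hihe := ih hav1
    rw [hs] at hihe
    rw [show expand (a :: s) (doubles (a :: t))
        = a :: expand s ((doubles (a :: t)).erase a) from by
      rw [expand, if_neg hnd]] at hihe
    rw [Finset.erase_eq_of_notMem hnd] at hihe
    injection hihe with _ hihe
    rw [hc3, hd3, hs]
    show (if a ∈ insert a (doubles (a :: t)) then
        a :: a :: expand s ((insert a (doubles (a :: t))).erase a) else _) = _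
    rw [if_pos (Finset.mem_insert_self a _), Finset.erase_insert hnd, hihe]
  | case4 a b t h ih =>
    intro hav
    have hav1 : AvoidP (b :: t) := avoidP_tail hav
    have hnd : a ∉ doubles (b :: t) := not_mem_doubles_tail hav
    have hc4 : contr (a :: b :: t) = a :: contr (b :: t) := by
      show (if a = b then _ else _) = _; rw [if_neg h]
    have hd4 : doubles (a :: b :: t) = doubles (b :: t) := by
      show (if a = b then _ else _) = _; rw [if_neg h]
    rw [hc4, hd4]
    show (if a ∈ doubles (b :: t) then _
        else a :: expand (contr (b :: t)) ((doubles (b :: t)).erase a)) = _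
    rw [if_neg hnd, Finset.erase_eq_of_notMem hnd, ih hav1]

def maxL (l : List ℕ) : ℕ := l.foldr max 0

lemma le_maxL : ∀ l : List ℕ, ∀ x ∈ l, x ≤ maxL l
  | a :: t, x, hx => by
    rcases List.mem_cons.1 hx with rfl | hx
    · exact le_max_left _ _
    · exact le_trans (le_maxL t x hx) (le_max_right _ _)

lemma maxL_mem : ∀ l : List ℕ, l ≠ [] → maxL l ∈ l
  | [a], _ => by simp [maxL]
  | a :: b :: t, _ => by
    have := maxL_mem (b :: t) (by simp)
    show max a (maxL (b :: t)) ∈ _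
    rcases le_total (maxL (b :: t)) a with h | h
    · rw [max_eq_left h]; simp
    · rw [max_eq_right h]; exact List.mem_cons_of_mem _ this

lemma maxL_eq_iff {l : List ℕ} (hl : l ≠ []) {j : ℕ} :
    maxL l = j ↔ (∀ x ∈ l, x ≤ j) ∧ j ∈ l := by
  constructor
  · rintro rfl
    exact ⟨le_maxL l, maxL_mem l hl⟩
  · rintro ⟨h1, h2⟩
    exact le_antisymm (h1 _ (maxL_mem l hl)) (le_maxL l j h2)

lemma ivt : ∀ (l : List ℕ) (c : ℕ), l.Chain' (fun a b => b ≤ a + 1) →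
    l.head? = some c → ∀ m ∈ l, ∀ v, c ≤ v → v ≤ m → v ∈ l
  | a :: t, c, hch, hh, m, hm, v, hcv, hvm => by
    injection hh with hh; subst hh
    rw [chain'_cons'] at hch
    rcases List.mem_cons.1 hm with heq | hm
    · have : v = a := le_antisymm (heq ▸ hvm) hcv
      simp [this]
    · rcases Nat.lt_or_ge a v with hav | hav
      · cases t with
        | nil => simp at hm
        | cons b t' =>
          have hb : b ≤ a + 1 := hch.1 b rfl
          have := ivt (b :: t') b hch.2 rfl m hm v (by omega) hvm
          exact List.mem_cons_of_mem _ this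
      · have : v = a := le_antisymm hav hcv
        simp [this]

lemma bound : ∀ (l : List ℕ) (c : ℕ), l.Chain' (fun a b => b ≤ a + 1) →
    l.head? = some c → ∀ x ∈ l, x + 1 ≤ c + l.length
  | a :: t, c, hch, hh, x, hx => by
    injection hh with hh; subst hh
    rw [chain'_cons'] at hch
    rcases List.mem_cons.1 hx with heq | hx
    · subst heq; simp
    · cases t with
      | nil => simp at hx
      | cons b t' =>
        have hb : b ≤ a + 1 := hch.1 b rfl
        have := bound (b :: t') b hch.2 rfl x hx
        simp at this ⊢
        omega

/-- finiteness of bounded lists -/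
lemma finite_bounded_lists (N M : ℕ) :
    {l : List ℕ | l.length ≤ N ∧ ∀ x ∈ l, x ≤ M}.Finite := by
  have h1 : {l : List (Fin (M + 1)) | l.length ≤ N}.Finite := List.finite_length_le _ N
  have h2 := h1.image (List.map (fun x : Fin (M + 1) => (x : ℕ)))
  apply Set.Finite.subset h2
  intro l ⟨hlen, hbd⟩
  refine ⟨l.pmap (fun x h => (⟨x, h⟩ : Fin (M + 1))) (fun x hx => Nat.lt_succ_of_le (hbd x hx)), ?_, ?_⟩
  · simpa using hlen
  · rw [List.map_pmap]
    simp [List.pmap_eq_map]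

lemma chain'_ofFn_iff {n : ℕ} (w : Fin n → ℕ) (R : ℕ → ℕ → Prop) :
    (List.ofFn w).Chain' R ↔ ∀ i : ℕ, ∀ h : i + 1 < n, R (w ⟨i, by omega⟩) (w ⟨i + 1, h⟩) := by
  rw [chain'_iff_getElem]
  constructor
  · intro hc i h
    have := hc i (by simp; omega)
    simpa [List.get_eq_getElem, List.getElem_ofFn] using this
  · intro hc i h
    simp at h
    have := hc i (by omega)
    simpa [List.get_eq_getElem, List.getElem_ofFn] using this

lemma isCat_iff {n : ℕ} (w : Fin n → ℕ) : IsCatalanWord w ↔ CatL (List.ofFn w) := by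
  unfold IsCatalanWord CatL
  rw [chain'_ofFn_iff]
  constructor
  · rintro ⟨h1, h2, h3⟩
    refine ⟨?_, ?_, h3⟩
    · intro x hx
      obtain ⟨k, hk⟩ := List.mem_ofFn.1 hx
      exact hk ▸ h1 k
    · intro a t hat
      have hn : 0 < n := by
        by_contra h
        have : n = 0 := by omega
        subst this
        simp at hat
      have h0 : (List.ofFn w)[0]? = some a := by rw [hat]; simp
      rw [List.getElem?_eq_getElem (by simpa using hn), List.getElem_ofFn] at h0
      injection h0 with h0
      rw [← h0]
      exact h2 hn
  · rintro ⟨h1, h2, h3⟩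
    refine ⟨?_, ?_, h3⟩
    · intro k
      exact h1 _ (List.mem_ofFn.2 ⟨k, rfl⟩)
    · intro hn
      obtain ⟨a, t, hat⟩ := List.exists_cons_of_ne_nil
        (show List.ofFn w ≠ [] by simp [← List.length_pos_iff]; omega)
      have h0 : (List.ofFn w)[0]? = some a := by rw [hat]; simp
      rw [List.getElem?_eq_getElem (by simpa using hn), List.getElem_ofFn] at h0
      injection h0 with h0
      rw [h0]
      exact h2 a t hat

lemma avoid_iff {n : ℕ} (w : Fin n → ℕ) : ¬ Contains1_11 w ↔ AvoidP (List.ofFn w) := by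
  constructor
  · intro hnc p v r hl hvp
    apply hnc
    obtain ⟨i, hip, hpi⟩ := List.mem_iff_getElem.1 hvp
    have hlen : n = p.length + (r.length + 2) := by
      have := congrArg List.length hl
      simp at this
      omega
    have hlw : (List.ofFn w).length = n := by simp
    refine ⟨i, p.length, by omega, by omega, ?_, ?_⟩
    · have e1 : (List.ofFn w)[i]'(by omega) = p[i]'hip := by
        simp only [hl]; exact List.getElem_append_left hip
      have e2 : (List.ofFn w)[p.length]'(by omega) = v := by
        simp only [hl]
        rw [List.getElem_append_right (le_refl p.length)]
        simp
      rw [List.getElem_ofFn] at e1 e2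
      rw [e1, e2, hpi]
    · have e2 : (List.ofFn w)[p.length]'(by omega) = v := by
        simp only [hl]
        rw [List.getElem_append_right (le_refl p.length)]
        simp
      have e3 : (List.ofFn w)[p.length + 1]'(by omega) = v := by
        simp only [hl]
        rw [List.getElem_append_right (by omega : p.length ≤ p.length + 1)]
        simp
      rw [List.getElem_ofFn] at e2 e3
      rw [e2, e3]
  · rintro hav ⟨i, j, hj, hij, e1, e2⟩
    set l := List.ofFn w with hldef
    have hlen : l.length = n := by simp [hldef]
    have hjl : j < l.length := by omega
    have hd1 : l.drop j = l[j] :: l.drop (j + 1) := List.drop_eq_getElem_cons (by omega)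
    have hd2 : l.drop (j + 1) = l[j + 1] :: l.drop (j + 2) := List.drop_eq_getElem_cons (by omega)
    have hjj : l[j + 1]'(by omega) = l[j]'(by omega) := by
      simp only [hldef, List.getElem_ofFn]
      exact (e2.symm.trans (by congr))
    have hdec : l = l.take j ++ l[j] :: l[j] :: l.drop (j + 2) := by
      conv_lhs => rw [← List.take_append_drop j l]
      rw [hd1, hd2, hjj]
    have := hav (l.take j) (l[j]'hjl) (l.drop (j + 2)) hdec
    apply this
    have : l[i]'(by omega) ∈ l.take j := by
      rw [List.mem_take_iff_getElem]
      exact ⟨i, by simp; omega, rfl⟩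
    have hii : l[i]'(by omega) = l[j]'hjl := by
      simp only [hldef, List.getElem_ofFn]
      exact e1.trans (by congr)
    rwa [hii] at this

def BL (i j : ℕ) : Set (List ℕ) :=
  {l | l.length = i ∧ CatL l ∧ l.Chain' (· ≠ ·) ∧ (∀ x ∈ l, x ≤ j) ∧ j ∈ l}

lemma image_ofFn (n : ℕ) (PL : List ℕ → Prop) :
    List.ofFn '' {w : Fin n → ℕ | PL (List.ofFn w)} = {l | l.length = n ∧ PL l} := by
  ext l
  constructor
  · rintro ⟨w, hw, rfl⟩
    exact ⟨by simp, hw⟩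
  · rintro ⟨hlen, hPL⟩
    subst hlen
    exact ⟨l.get, by simpa [List.ofFn_get] using hPL, List.ofFn_get l⟩

lemma head?_one {u : List ℕ} (hcat : CatL u) (hne : u ≠ []) : u.head? = some 1 := by
  obtain ⟨a, t, rfl⟩ := List.exists_cons_of_ne_nil hne
  rw [hcat.2.1 a t rfl]
  rfl

lemma le_len {u : List ℕ} (hcat : CatL u) (hne : u ≠ []) : ∀ x ∈ u, x ≤ u.length := by
  intro x hx
  have := bound u 1 hcat.2.2 (head?_one hcat hne) x hx
  omega

lemma toFinset_eq_Icc {u : List ℕ} (hcat : CatL u) {j : ℕ}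
    (hub : ∀ x ∈ u, x ≤ j) (hj : j ∈ u) : u.toFinset = Finset.Icc 1 j := by
  have hne : u ≠ [] := by rintro rfl; simp at hj
  ext x
  rw [List.mem_toFinset, Finset.mem_Icc]
  constructor
  · intro hx; exact ⟨hcat.1 x hx, hub x hx⟩
  · rintro ⟨h1, h2⟩
    exact ivt u 1 hcat.2.2 (head?_one hcat hne) j hj x h1 h2

lemma BL_finite (i j : ℕ) : (BL i j).Finite := by
  apply Set.Finite.subset (finite_bounded_lists i j)
  rintro l ⟨hlen, _, _, hub, _⟩
  exact ⟨le_of_eq hlen, hub⟩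

lemma q_eq (i j : ℕ) : q i j = (BL i j).ncard := by
  unfold q
  have hset : {w : Fin i → ℕ | IsCatalanWord w ∧
      (∀ k : ℕ, ∀ h : k + 1 < i, w ⟨k + 1, h⟩ ≠ w ⟨k, by omega⟩) ∧
      (∀ k, w k ≤ j) ∧ (∃ k, w k = j)}
      = {w : Fin i → ℕ | CatL (List.ofFn w) ∧ (List.ofFn w).Chain' (· ≠ ·) ∧
          (∀ x ∈ List.ofFn w, x ≤ j) ∧ j ∈ List.ofFn w} := by
    ext w
    simp only [Set.mem_setOf_eq]
    constructor
    · rintro ⟨h1, h2, h3, h4⟩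
      refine ⟨(isCat_iff w).1 h1, ?_, ?_, ?_⟩
      · exact (chain'_ofFn_iff w (· ≠ ·)).2 (fun k h => (h2 k h).symm)
      · intro x hx
        obtain ⟨k, hk⟩ := List.mem_ofFn.1 hx
        exact hk ▸ h3 k
      · obtain ⟨k, hk⟩ := h4
        exact List.mem_ofFn.2 ⟨k, hk⟩
    · rintro ⟨h1, h2, h3, h4⟩
      refine ⟨(isCat_iff w).2 h1, ?_, ?_, ?_⟩
      · exact fun k h => ((chain'_ofFn_iff w (· ≠ ·)).1 h2 k h).symm
      · exact fun k => h3 _ (List.mem_ofFn.2 ⟨k, rfl⟩)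
      · exact List.mem_ofFn.1 h4
  rw [hset]
  rw [← Set.ncard_image_of_injective _ (List.ofFn_injective (n := i))]
  congr 1
  rw [image_ofFn i (fun l => CatL l ∧ l.Chain' (· ≠ ·) ∧ (∀ x ∈ l, x ≤ j) ∧ j ∈ l)]
  ext l
  simp only [BL, Set.mem_setOf_eq]

lemma q_zero {i j : ℕ} (hij : i < j) : q i j = 0 := by
  rw [q_eq]
  convert Set.ncard_empty (List ℕ)
  rw [Set.eq_empty_iff_forall_notMem]
  rintro l ⟨hlen, hcat, _, _, hj⟩
  have hne : l ≠ [] := by rintro rfl; simp at hj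
  have := le_len hcat hne j hj
  omega

end CatAux

open CatAux in
theorem catalan_avoid_1_11 (n : ℕ) (hn : 1 ≤ n) :
    Set.ncard {w : Fin n → ℕ | IsCatalanWord w ∧ ¬ Contains1_11 w} =
      ∑ i ∈ Finset.Icc 1 n, ∑ j ∈ Finset.Icc 1 i, Nat.choose j (n - i) * q i j := by
  classical
  have hset : {w : Fin n → ℕ | IsCatalanWord w ∧ ¬ Contains1_11 w}
      = {w : Fin n → ℕ | CatL (List.ofFn w) ∧ AvoidP (List.ofFn w)} := by
    ext w
    simp only [Set.mem_setOf_eq]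
    rw [isCat_iff, avoid_iff]
  have himg := image_ofFn n (fun l => CatL l ∧ AvoidP l)
  rw [hset, ← Set.ncard_image_of_injective _ (List.ofFn_injective (n := n)), himg]
  set D : Set (List ℕ × Finset ℕ) :=
    {p | (CatL p.1 ∧ p.1.Chain' (· ≠ ·) ∧ p.1 ≠ []) ∧
      p.1.length + p.2.card = n ∧ p.2 ⊆ p.1.toFinset} with hD
  have hAD : {l : List ℕ | l.length = n ∧ CatL l ∧ AvoidP l}
      = (fun p : List ℕ × Finset ℕ => expand p.1 p.2) '' D := by
    ext l
    constructor
    · rintro ⟨hlen, hcat, hav⟩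
      have hlne : l ≠ [] := by rintro rfl; simp at hlen; omega
      have hTsub : doubles l ⊆ (contr l).toFinset := by
        intro x hx
        obtain ⟨p, r, hpr⟩ := mem_doubles l x hx
        exact List.mem_toFinset.2 ((mem_contr l).2 (by rw [hpr]; simp))
      have hexp : expand (contr l) (doubles l) = l := expand_contr_doubles l hav
      have hch : (contr l).head? = l.head? := head?_contr l
      have hcne : contr l ≠ [] := by
        intro h
        rw [h, head?_one hcat hlne] at hch
        simp at hch
      have hhead : ∀ a t, contr l = a :: t → a = 1 := by
        intro a t hat
        rw [hat, head?_one hcat hlne] at hch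
        simpa using hch
      have hcatc : CatL (contr l) :=
        ⟨fun x hx => hcat.1 x ((mem_contr l).1 hx), hhead, chain'_step_contr l hcat.2.2⟩
      have hlen2 : (contr l).length + (doubles l).card = n := by
        have hle := length_expand (contr l) (doubles l) hTsub
        rw [hexp] at hle
        omega
      exact ⟨(contr l, doubles l), ⟨⟨hcatc, chain'_ne_contr l, hcne⟩, hlen2, hTsub⟩, hexp⟩
    · rintro ⟨⟨u, T⟩, ⟨⟨hcat, hne, hnnil⟩, hlenc, hsub⟩, rfl⟩
      dsimp only
      refine ⟨?_, ⟨?_, ?_, chain'_expand u T hcat.2.2⟩, ?_⟩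
      · rw [length_expand u T hsub]; exact hlenc
      · intro x hx
        exact hcat.1 x ((mem_expand u T).1 hx)
      · intro a t hat
        obtain ⟨b, u', rfl⟩ := List.exists_cons_of_ne_nil hnnil
        have hb := hcat.2.1 b u' rfl
        have hh := head?_expand b u' T
        rw [hat] at hh
        simp at hh
        omega
      · intro p v r hpr
        exact (expand_avoid u T hne p v r hpr).1
  have hinj : Set.InjOn (fun p : List ℕ × Finset ℕ => expand p.1 p.2) D := by
    rintro ⟨u, T⟩ ⟨h1, _, hsub⟩ ⟨u', T'⟩ ⟨h1', _, hsub'⟩ he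
    simp only at he
    have hu : u = u' := by
      rw [← contr_expand u T h1.2.1, ← contr_expand u' T' h1'.2.1, he]
    have hT : T = T' := by
      have d1 := doubles_expand u T h1.2.1 hsub
      have d2 := doubles_expand u' T' h1'.2.1 hsub'
      rw [← d1, ← d2, he]
    exact Prod.ext hu hT
  rw [hAD, Set.ncard_image_of_injOn hinj]
  have hDfin : D.Finite := by
    apply Set.Finite.subset
      (Set.Finite.prod (finite_bounded_lists n n) ((Finset.Icc 1 n).powerset.finite_toSet))
    rintro ⟨u, T⟩ ⟨⟨hcat, _, hnnil⟩, hlenc, hsub⟩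
    dsimp only at hcat hnnil hlenc hsub ⊢
    have hulen : u.length ≤ n := by omega
    have hub : ∀ x ∈ u, x ≤ n := fun x hx => le_trans (le_len hcat hnnil x hx) hulen
    refine ⟨⟨hulen, hub⟩, ?_⟩
    have hTIcc : T ⊆ Finset.Icc 1 n := by
      intro x hx
      have hxu : x ∈ u := List.mem_toFinset.1 (hsub hx)
      exact Finset.mem_Icc.2 ⟨hcat.1 x hxu, hub x hxu⟩
    exact Finset.mem_coe.2 (Finset.mem_powerset.2 hTIcc)
  rw [Set.ncard_eq_toFinset_card _ hDfin]
  have hmaps : ∀ p ∈ hDfin.toFinset,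
      (p.1.length, maxL p.1) ∈ Finset.Icc 1 n ×ˢ Finset.Icc 1 n := by
    rintro ⟨u, T⟩ hp
    rw [Set.Finite.mem_toFinset] at hp
    obtain ⟨⟨hcat, _, hnnil⟩, hlenc, hsub⟩ := hp
    dsimp only at hcat hnnil hlenc hsub ⊢
    have hulen : u.length ≤ n := by omega
    have h1len : 1 ≤ u.length := List.length_pos_iff.2 hnnil
    have hmx : maxL u ∈ u := maxL_mem u hnnil
    refine Finset.mem_product.2 ⟨Finset.mem_Icc.2 ⟨h1len, hulen⟩,
      Finset.mem_Icc.2 ⟨hcat.1 _ hmx, le_trans (le_len hcat hnnil _ hmx) hulen⟩⟩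
  rw [Finset.card_eq_sum_card_fiberwise hmaps, Finset.sum_product]
  apply Finset.sum_congr rfl
  intro i hi
  obtain ⟨hi1, hin⟩ := Finset.mem_Icc.1 hi
  have hfib : ∀ j ∈ Finset.Icc 1 n,
      (hDfin.toFinset.filter (fun p => (p.1.length, maxL p.1) = (i, j))).card
        = Nat.choose j (n - i) * q i j := by
    intro j hj
    have hprod : hDfin.toFinset.filter (fun p => (p.1.length, maxL p.1) = (i, j))
        = (BL_finite i j).toFinset ×ˢ Finset.powersetCard (n - i) (Finset.Icc 1 j) := by
      ext ⟨u, T⟩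
      simp only [Finset.mem_filter, Set.Finite.mem_toFinset, Finset.mem_product,
        Finset.mem_powersetCard, Prod.mk.injEq]
      constructor
      · rintro ⟨⟨⟨hcat, hne, hnnil⟩, hlenc, hsub⟩, hlen, hmax⟩
        dsimp only at hcat hne hnnil hlenc hsub hlen hmax ⊢
        have hmax' := (maxL_eq_iff hnnil).1 hmax
        have hicc : u.toFinset = Finset.Icc 1 j := toFinset_eq_Icc hcat hmax'.1 hmax'.2
        refine ⟨⟨hlen, hcat, hne, hmax'.1, hmax'.2⟩, ?_, ?_⟩
        · rw [← hicc]; exact hsub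
        · omega
      · rintro ⟨⟨hlen, hcat, hne, hub, hjm⟩, hTsub, hTcard⟩
        have hnnil : u ≠ [] := by rintro rfl; simp at hjm
        have hicc : u.toFinset = Finset.Icc 1 j := toFinset_eq_Icc hcat hub hjm
        refine ⟨⟨⟨hcat, hne, hnnil⟩, ?_, ?_⟩, hlen, (maxL_eq_iff hnnil).2 ⟨hub, hjm⟩⟩
        · rw [hlen, hTcard]; omega
        · rw [hicc]; exact hTsub
    rw [hprod, Finset.card_product, Finset.card_powersetCard, Nat.card_Icc]
    rw [q_eq, Set.ncard_eq_toFinset_card _ (BL_finite i j)]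
    simp [Nat.mul_comm]
  rw [Finset.sum_congr rfl hfib]
  symm
  apply Finset.sum_subset (Finset.Icc_subset_Icc_right hin)
  intro j hjn hji
  rw [Finset.mem_Icc] at hjn hji
  have : i < j := by omega
  rw [q_zero this, Nat.mul_zero]
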